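/- arXiv:1101.3716 — 8 statements merged into one kernel-verified Lean document; each statement's English description precedes it below -/
import Mathlib

section
/- Let $d \geq 1$, let $P$ be a locally finite subset of $\mathbb{R}^d$, and let $G$ be a simple graph with vertex set $P$ that is a stable multi-matching in which every vertex has degree at most $k$. For $x \in P$ let $M_x$ denote the length of the longest edge of $G$ incident to $x$ (and $M_x=0$ if $x$ has no incident edge). Then for every $z \in \mathbb{R}^d$ and every $t > 0$, the set $\{x \in P : |x - z| \leq t/2 \text{ and } M_x > t\}$ has at most $k+1$ elements. -/
/-- `G` is a stable multi-matching on `P ⊆ ℝ^d`: for any two distinct points, either they are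
adjacent, or one of them has no incident edge longer than the distance between them. -/
def IsStableMultiMatchingEuc (d : ℕ) (P : Set (EuclideanSpace ℝ (Fin d)))
    (G : SimpleGraph P) : Prop :=
  ∀ x y : P, x ≠ y →
    G.Adj x y ∨
    (∀ z : P, G.Adj x z → dist (x : EuclideanSpace ℝ (Fin d)) z ≤
      dist (x : EuclideanSpace ℝ (Fin d)) y) ∨
    (∀ z : P, G.Adj y z → dist (y : EuclideanSpace ℝ (Fin d)) z ≤
      dist (x : EuclideanSpace ℝ (Fin d)) y)

/-- In a stable multi-matching on a locally finite `P ⊆ ℝ^d` with all degrees at most `k`,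
for any site `z` and any `t > 0` there are at most `k + 1` points within distance `t/2` of `z`
having an incident edge longer than `t`. -/
theorem few_long_edge_points
    (d : ℕ) (hd : 1 ≤ d)
    (P : Set (EuclideanSpace ℝ (Fin d)))
    (hloc : ∀ K : Set (EuclideanSpace ℝ (Fin d)), IsCompact K → (P ∩ K).Finite)
    (G : SimpleGraph P)
    (k : ℕ)
    (hfin : ∀ x : P, {y : P | G.Adj x y}.Finite)
    (hdeg : ∀ x : P, {y : P | G.Adj x y}.ncard ≤ k)
    (hstable : IsStableMultiMatchingEuc d P G)
    (z : EuclideanSpace ℝ (Fin d)) (t : ℝ) (ht : 0 < t) :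
    {x : P | dist (x : EuclideanSpace ℝ (Fin d)) z ≤ t / 2 ∧
        ∃ y : P, G.Adj x y ∧ t < dist (x : EuclideanSpace ℝ (Fin d)) y}.Finite ∧
    {x : P | dist (x : EuclideanSpace ℝ (Fin d)) z ≤ t / 2 ∧
        ∃ y : P, G.Adj x y ∧ t < dist (x : EuclideanSpace ℝ (Fin d)) y}.ncard ≤ k + 1 := by
  set S := {x : P | dist (x : EuclideanSpace ℝ (Fin d)) z ≤ t / 2 ∧
      ∃ y : P, G.Adj x y ∧ t < dist (x : EuclideanSpace ℝ (Fin d)) y} with hS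
  have hclique : ∀ x ∈ S, ∀ x' ∈ S, x ≠ x' → G.Adj x x' := by
    intro x hx x' hx' hne
    obtain ⟨hxz, y, hxy, hty⟩ := hx
    obtain ⟨hx'z, y', hx'y', hty'⟩ := hx'
    have hdxx' : dist (x : EuclideanSpace ℝ (Fin d)) x' ≤ t := by
      calc dist (x : EuclideanSpace ℝ (Fin d)) x'
          ≤ dist (x : EuclideanSpace ℝ (Fin d)) z + dist z (x' : EuclideanSpace ℝ (Fin d)) :=
            dist_triangle _ _ _
        _ ≤ t / 2 + t / 2 := by
            have := hx'z
            rw [dist_comm] at this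
            linarith
        _ = t := by ring
    rcases hstable x x' hne with h | h | h
    · exact h
    · exact absurd (h y hxy) (by linarith)
    · exact absurd (h y' hx'y') (by linarith)
  have hSfin : S.Finite := by
    have hK : (P ∩ Metric.closedBall z (t / 2)).Finite :=
      hloc _ (isCompact_closedBall z (t / 2))
    have : S ⊆ Subtype.val ⁻¹' (P ∩ Metric.closedBall z (t / 2)) := by
      intro x hx
      exact ⟨x.2, Metric.mem_closedBall.mpr hx.1⟩
    exact Set.Finite.subset (hK.preimage (Subtype.val_injective.injOn)) this
  refine ⟨hSfin, ?_⟩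
  rcases Set.eq_empty_or_nonempty S with hE | ⟨x₀, hx₀⟩
  · simp [hE]
  · have hsub : S ⊆ insert x₀ {y : P | G.Adj x₀ y} := by
      intro x hx
      by_cases hx0 : x = x₀
      · exact hx0 ▸ Set.mem_insert _ _
      · exact Set.mem_insert_of_mem _ ((hclique x₀ hx₀ x hx (Ne.symm hx0)))
    calc S.ncard ≤ (insert x₀ {y : P | G.Adj x₀ y}).ncard :=
          Set.ncard_le_ncard hsub ((hfin x₀).insert x₀)
      _ ≤ {y : P | G.Adj x₀ y}.ncard + 1 := Set.ncard_insert_le _ _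
      _ ≤ k + 1 := by have := hdeg x₀; omega
end

section
/- Let $P$ be a locally finite subset of $\mathbb{R}$ and let $G$ be a simple graph with vertex set $P$ that is a stable multi-matching. If $a, b, c, d \in P$ with $a < c < b < d$, and $\{a,b\}$ and $\{c,d\}$ are edges of $G$, then $\{c,b\}$ is also an edge of $G$. -/
/-- `G` is a stable multi-matching on `P ⊆ ℝ`: for any two distinct points, either they are
adjacent, or one of them has no incident edge longer than the distance between them. -/
def IsStableMultiMatching (P : Set ℝ) (G : SimpleGraph P) : Prop :=
  ∀ x y : P, x ≠ y →
    G.Adj x y ∨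
    (∀ z : P, G.Adj x z → |(z : ℝ) - (x : ℝ)| ≤ |(y : ℝ) - (x : ℝ)|) ∨
    (∀ z : P, G.Adj y z → |(z : ℝ) - (y : ℝ)| ≤ |(y : ℝ) - (x : ℝ)|)

/-- In a stable multi-matching on a locally finite `P ⊆ ℝ`, if the edges `{a,b}` and `{c,d}`
cross (i.e. `a < c < b < d`), then `{c,b}` is also an edge. -/
theorem crossing_implies_edge
    (P : Set ℝ) (hloc : ∀ K : Set ℝ, IsCompact K → (P ∩ K).Finite)
    (G : SimpleGraph P)
    (hfin : ∀ x : P, {y : P | G.Adj x y}.Finite)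
    (hstable : IsStableMultiMatching P G)
    (a b c d : P)
    (hac : (a : ℝ) < c) (hcb : (c : ℝ) < b) (hbd : (b : ℝ) < d)
    (hab : G.Adj a b) (hcd : G.Adj c d) :
    G.Adj c b := by
  have hne : c ≠ b := fun h => absurd (congrArg (Subtype.val) h) (ne_of_lt hcb)
  rcases hstable c b hne with h | h | h
  · exact h
  · exfalso
    have := h d hcd
    rw [abs_of_pos (by linarith), abs_of_pos (by linarith)] at this
    linarith
  · exfalso
    have := h a hab.symm
    rw [abs_of_neg (by linarith), abs_of_pos (by linarith)] at this
    linarith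
end

section
/- Let $P$ be a locally finite subset of $\mathbb{R}$ and let $G$ be a simple graph with vertex set $P$ that is a direction-stable matching. If $a, b, c, d \in P$ with $a < c < b < d$, and $\{a,b\}$ and $\{c,d\}$ are edges of $G$, then $\{c,b\}$ is also an edge of $G$. -/
/-- `G` is a direction-stable matching on `P ⊆ ℝ`: for any two points `x < y`, either they are
adjacent, or `x` has no right-edge longer than `y - x`, or `y` has no left-edge longer
than `y - x`. -/
def IsDirectionStableMatching (P : Set ℝ) (G : SimpleGraph P) : Prop :=
  ∀ x y : P, (x : ℝ) < y →
    G.Adj x y ∨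
    (∀ z : P, G.Adj x z → (x : ℝ) < z → (z : ℝ) - (x : ℝ) ≤ (y : ℝ) - (x : ℝ)) ∨
    (∀ z : P, G.Adj y z → (z : ℝ) < y → (y : ℝ) - (z : ℝ) ≤ (y : ℝ) - (x : ℝ))

/-- In a direction-stable matching on a locally finite `P ⊆ ℝ`, if the edges `{a,b}` and
`{c,d}` cross (i.e. `a < c < b < d`), then `{c,b}` is also an edge. -/
theorem crossing_implies_edge_direction_stable
    (P : Set ℝ) (hloc : ∀ K : Set ℝ, IsCompact K → (P ∩ K).Finite)
    (G : SimpleGraph P)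
    (hfin : ∀ x : P, {y : P | G.Adj x y}.Finite)
    (hstable : IsDirectionStableMatching P G)
    (a b c d : P)
    (hac : (a : ℝ) < c) (hcb : (c : ℝ) < b) (hbd : (b : ℝ) < d)
    (hab : G.Adj a b) (hcd : G.Adj c d) :
    G.Adj c b := by
  rcases hstable c b hcb with h | h | h
  · exact h
  · have := h d hcd (hcb.trans hbd)
    linarith
  · have := h a hab.symm (hac.trans hcb)
    linarith
end

section
/- Let $P$ be a locally finite subset of $\mathbb{R}$ and let $G$ be a simple graph with vertex set $P$ that is a stable multi-matching in which every vertex has degree at most $2$. Then no two edges of $G$ cross: there do not exist $a, b, c, d \in P$ with $a < c < b < d$ such that $\{a,b\}$ and $\{c,d\}$ are both edges of $G$. -/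
/-- In a stable multi-matching on a locally finite `P ⊆ ℝ` in which every vertex has degree
at most `2`, no two edges cross. -/
theorem no_crossing_edges_degree_two
    (P : Set ℝ) (hloc : ∀ K : Set ℝ, IsCompact K → (P ∩ K).Finite)
    (G : SimpleGraph P)
    (hfin : ∀ x : P, {y : P | G.Adj x y}.Finite)
    (hdeg : ∀ x : P, {y : P | G.Adj x y}.ncard ≤ 2)
    (hstable : IsStableMultiMatching P G) :
    ¬ ∃ a b c d : P, (a : ℝ) < c ∧ (c : ℝ) < b ∧ (b : ℝ) < d ∧ G.Adj a b ∧ G.Adj c d := by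
  rintro ⟨a, b, c, d, hac, hcb, hbd, hab, hcd⟩
  -- A vertex cannot have three distinct neighbors.
  have key : ∀ x y z w : P, (x : ℝ) ≠ y → (x : ℝ) ≠ z → (y : ℝ) ≠ z →
      G.Adj w x → G.Adj w y → G.Adj w z → False := by
    intro x y z w hxy hxz hyz h1 h2 h3
    have hsub : ({x, y, z} : Set P) ⊆ {u : P | G.Adj w u} := by
      intro u hu
      rcases hu with h | h | h <;> simp_all
    have h3' : ({x, y, z} : Set P).ncard = 3 := by
      rw [Set.ncard_eq_three]
      exact ⟨x, y, z, Subtype.coe_ne_coe.mp hxy, Subtype.coe_ne_coe.mp hxz,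
        Subtype.coe_ne_coe.mp hyz, rfl⟩
    have hle := Set.ncard_le_ncard hsub (hfin w)
    have := hdeg w
    omega
  -- Step 1: stability forces the edge {c, b}.
  have hcbAdj : G.Adj c b := by
    rcases hstable c b (Subtype.coe_ne_coe.mp (ne_of_lt hcb)) with h | h | h
    · exact h
    · have h' := h d hcd
      rw [abs_of_pos (by linarith), abs_of_pos (by linarith)] at h'
      linarith
    · have h' := h a hab.symm
      rw [abs_sub_comm, abs_of_pos (by linarith), abs_of_pos (by linarith)] at h'
      linarith
  -- Step 2: degree ≤ 2 forbids edges {b, d} and {c, a}.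
  have hnbd : ¬ G.Adj b d := fun h =>
    key a c d b (ne_of_lt hac) (by linarith [hac, hcb, hbd] : (a:ℝ) ≠ d)
      (ne_of_lt (by linarith : (c:ℝ) < d)) hab.symm hcbAdj.symm h
  have hnca : ¬ G.Adj c a := fun h =>
    key a b d c (by linarith : (a:ℝ) ≠ b) (by linarith : (a:ℝ) ≠ d)
      (ne_of_lt hbd) h hcbAdj hcd
  -- Step 3: stability on (a, c) gives d - c ≤ c - a.
  have h1 : (d : ℝ) - c ≤ (c : ℝ) - a := by
    rcases hstable a c (Subtype.coe_ne_coe.mp (ne_of_lt hac)) with h | h | h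
    · exact absurd h.symm hnca
    · have h' := h b hab
      rw [abs_of_pos (by linarith), abs_of_pos (by linarith)] at h'
      linarith
    · have h' := h d hcd
      rw [abs_of_pos (by linarith), abs_of_pos (by linarith)] at h'
      linarith
  -- Step 4: stability on (b, d) gives b - a ≤ d - b.
  have h2 : (b : ℝ) - a ≤ (d : ℝ) - b := by
    rcases hstable b d (Subtype.coe_ne_coe.mp (ne_of_lt hbd)) with h | h | h
    · exact absurd h hnbd
    · have h' := h a hab.symm
      rw [abs_sub_comm, abs_of_pos (by linarith), abs_of_pos (by linarith)] at h'
      linarith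
    · have h' := h c hcd.symm
      rw [abs_sub_comm, abs_of_pos (by linarith), abs_of_pos (by linarith)] at h'
      linarith
  linarith
end

section
/- Let $P$ be a locally finite subset of $\mathbb{R}$ and let $G$ be a simple graph with vertex set $P$ that is a stable multi-matching in which every vertex has degree exactly $2$. Let $a < b < c < d$ be points of $P$ with $b - a > c - b$ and $d - c > c - b$. If $G$ contains a monotone path from $a$ to $b$ and a monotone path from $c$ to $d$, then $G$ contains a monotone path from $a$ to $d$ whose vertex set contains the vertex sets of both given paths. -/
/-- `l` is a monotone path in `G`: a sequence of vertices that is strictly increasing and whose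
consecutive elements are adjacent in `G`. -/
def IsMonotonePath (P : Set ℝ) (G : SimpleGraph P) (l : List P) : Prop :=
  l ≠ [] ∧ l.Chain' (fun u v : P => ((u : ℝ) < (v : ℝ)) ∧ G.Adj u v)

section helpers
variable {γ : Type*}

lemma chain'_get_aux {R : γ → γ → Prop} {l : List γ} (h : l.Chain' R) :
    ∀ (i : ℕ) (hi : i < l.length - 1), R (l.get ⟨i, by omega⟩) (l.get ⟨i + 1, by omega⟩) :=
  fun i hi => List.isChain_iff_getElem.mp h i (by omega)

lemma get_congr' (α : List γ) (i j : ℕ) (hi : i < α.length) (hj : j < α.length)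
    (h : i = j) : α.get ⟨i, hi⟩ = α.get ⟨j, hj⟩ := by subst h; rfl

lemma exists_penult' {R : γ → γ → Prop} {α : List γ} (hne : α ≠ [])
    (hch : α.Chain' R) {a m : γ} (hhead : α.head? = some a) (hlast : α.getLast? = some m)
    (ham : a ≠ m) : ∃ x : γ, R x m := by
  have hk1 : 0 < α.length := List.length_pos_iff.mpr hne
  have hget0 : α.get ⟨0, hk1⟩ = a := by
    rw [List.head?_eq_head hne] at hhead
    have h := Option.some_inj.mp hhead
    rw [← h]
    simp [List.get_mk_zero, List.head_eq_getElem]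
  have hgetlast : α.get ⟨α.length - 1, by omega⟩ = m := by
    rw [List.getLast?_eq_getLast hne] at hlast
    have h := Option.some_inj.mp hlast
    rw [List.getLast_eq_getElem] at h
    exact h
  have hk2 : 2 ≤ α.length := by
    by_contra h
    apply ham
    rw [← hget0, ← hgetlast]
    exact get_congr' _ _ _ _ _ (by omega)
  refine ⟨α.get ⟨α.length - 2, by omega⟩, ?_⟩
  have h := chain'_get_aux hch (α.length - 2) (by omega)
  have e : α.get ⟨α.length - 2 + 1, by omega⟩ = m := by
    rw [get_congr' α (α.length - 2 + 1) (α.length - 1) (by omega) (by omega) (by omega)]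
    exact hgetlast
  rw [e] at h
  exact h

lemma exists_second' {R : γ → γ → Prop} {δ : List γ} (hne : δ ≠ [])
    (hch : δ.Chain' R) {c d : γ} (hhead : δ.head? = some c) (hlast : δ.getLast? = some d)
    (hcd : c ≠ d) : ∃ y : γ, R c y := by
  have hk1 : 0 < δ.length := List.length_pos_iff.mpr hne
  have hget0 : δ.get ⟨0, hk1⟩ = c := by
    rw [List.head?_eq_head hne] at hhead
    have h := Option.some_inj.mp hhead
    rw [← h]
    simp [List.get_mk_zero, List.head_eq_getElem]
  have hgetlast : δ.get ⟨δ.length - 1, by omega⟩ = d := by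
    rw [List.getLast?_eq_getLast hne] at hlast
    have h := Option.some_inj.mp hlast
    rw [List.getLast_eq_getElem] at h
    exact h
  have hk2 : 2 ≤ δ.length := by
    by_contra h
    apply hcd
    rw [← hget0, ← hgetlast]
    exact get_congr' _ _ _ _ _ (by omega)
  have h := chain'_get_aux hch 0 (by omega)
  rw [hget0] at h
  exact ⟨_, h⟩

end helpers


variable {P : Set ℝ} {G : SimpleGraph P}

lemma nbhr_pair (hdeg : ∀ x : P, {y : P | G.Adj x y}.ncard = 2)
    {z p q : P} (hp : G.Adj z p) (hq : G.Adj z q) (hpq : p ≠ q) :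
    ∀ y : P, G.Adj z y ↔ (y = p ∨ y = q) := by
  have hfin : {y : P | G.Adj z y}.Finite := by
    by_contra h
    have h0 := Set.Infinite.ncard h
    rw [hdeg z] at h0
    omega
  have hsub : ({p, q} : Set P) ⊆ {y : P | G.Adj z y} := by
    intro y hy
    rcases hy with rfl | hy
    · exact hp
    · simp only [Set.mem_singleton_iff] at hy; subst hy; exact hq
  have hle : {y : P | G.Adj z y}.ncard ≤ ({p, q} : Set P).ncard := by
    rw [hdeg z, Set.ncard_pair hpq]
  have heq := Set.eq_of_subset_of_ncard_le hsub hle hfin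
  intro y
  constructor
  · intro hy; have : y ∈ ({p, q} : Set P) := heq ▸ hy; simpa using this
  · rintro (rfl | rfl); exacts [hp, hq]

lemma ball_finite (hloc : ∀ K : Set ℝ, IsCompact K → (P ∩ K).Finite)
    (m : ℝ) (r : ℝ) : {z : P | |(z:ℝ) - m| ≤ r}.Finite := by
  have hK : IsCompact (Set.Icc (m - r) (m + r)) := isCompact_Icc
  have h := hloc _ hK
  have hsub : {z : P | |(z:ℝ) - m| ≤ r} ⊆ (Subtype.val) ⁻¹' (P ∩ Set.Icc (m - r) (m + r)) := by
    intro z hz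
    simp only [Set.mem_setOf_eq] at hz
    have h1 := (abs_le.mp hz).1
    have h2 := (abs_le.mp hz).2
    simp only [Set.mem_preimage, Set.mem_inter_iff, Set.mem_Icc]
    exact ⟨z.2, by linarith, by linarith⟩
  exact Set.Finite.subset (Set.Finite.preimage (Subtype.val_injective.injOn) h) hsub

lemma bad_config (hloc : ∀ K : Set ℝ, IsCompact K → (P ∩ K).Finite)
    (hdeg : ∀ x : P, {y : P | G.Adj x y}.ncard = 2)
    (hstable : IsStableMultiMatching P G)
    (f : P → ℝ) (hf : ∀ u v : P, |f u - f v| = |(u:ℝ) - (v:ℝ)|)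
    (α : List P) (hne : α ≠ [])
    (hch : α.Chain' (fun u v : P => f u < f v ∧ G.Adj u v))
    (a m : P) (hhead : α.head? = some a) (hlast : α.getLast? = some m)
    (n₁ n₂ : P) (hN : ∀ y : P, G.Adj m y ↔ (y = n₁ ∨ y = n₂))
    (hn₁m : f n₁ < f m) (hn₂m : f n₂ < f m)
    (han₁ : f a < f n₁) (han₂ : f a < f n₂) : False := by
  -- basic facts about f
  have hfinj : ∀ u v : P, f u = f v → u = v := by
    intro u v h
    have h2 := hf u v
    rw [h, sub_self, abs_zero] at h2
    exact Subtype.ext (by linarith [abs_nonneg ((u:ℝ) - v), (abs_eq_zero).mp h2.symm])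
  have hst' : ∀ x y : P, x ≠ y → G.Adj x y ∨
      (∀ z : P, G.Adj x z → |f z - f x| ≤ |f y - f x|) ∨
      (∀ z : P, G.Adj y z → |f z - f y| ≤ |f y - f x|) := by
    intro x y hxy
    simpa only [hf] using hstable x y hxy
  -- index plumbing
  set k := α.length with hk
  have hk1 : 0 < k := List.length_pos_iff.mpr hne
  have hget0 : α.get ⟨0, hk1⟩ = a := by
    rw [List.head?_eq_head hne] at hhead
    have h := Option.some_inj.mp hhead
    rw [← h]
    simp [List.get_mk_zero, List.head_eq_getElem]
  have hgetlast : α.get ⟨k - 1, by omega⟩ = m := by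
    rw [List.getLast?_eq_getLast hne] at hlast
    have h := Option.some_inj.mp hlast
    rw [List.getLast_eq_getElem] at h
    exact h
  have hstep := chain'_get_aux hch
  have hmono : ∀ (i j : ℕ) (hi : i < k) (hj : j < k), i < j →
      f (α.get ⟨i, hi⟩) < f (α.get ⟨j, hj⟩) := by
    haveI : IsTrans P (fun u v : P => f u < f v) := ⟨fun a b c h1 h2 => lt_trans h1 h2⟩
    have hp := List.isChain_iff_pairwise.mp (hch.imp (fun a b h => h.1))
    intro i j hi hj hij
    exact List.pairwise_iff_get.mp hp ⟨i, hi⟩ ⟨j, hj⟩ hij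
  have hgeq : ∀ (i j : ℕ) (hi : i < k) (hj : j < k), i = j →
      α.get ⟨i, hi⟩ = α.get ⟨j, hj⟩ := by
    intro i j hi hj h; subst h; rfl
  have ham : f a < f m := lt_trans han₁ hn₁m
  have hk2 : 2 ≤ k := by
    by_contra h
    have hk1' : k = 1 := by omega
    have : a = m := by
      rw [← hget0, ← hgetlast]; exact hgeq _ _ _ _ (by omega)
    rw [this] at ham; exact lt_irrefl _ ham
  set x : P := α.get ⟨k - 2, by omega⟩ with hxdef
  have hxm : f x < f m ∧ G.Adj x m := by
    have h := hstep (k - 2) (by omega)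
    have e : α.get ⟨k - 2 + 1, by omega⟩ = m := by
      rw [hgeq (k - 2 + 1) (k - 1) (by omega) (by omega) (by omega)]; exact hgetlast
    rw [e] at h; exact h
  have hx_n : x = n₁ ∨ x = n₂ := (hN x).mp hxm.2.symm
  have hax : f a < f x := by
    rcases hx_n with h | h <;> rw [h] <;> [exact han₁; exact han₂]
  have hk3 : 3 ≤ k := by
    by_contra h
    have hk2' : k = 2 := by omega
    have : x = a := by
      rw [hxdef, ← hget0]; exact hgeq _ _ _ _ (by omega)
    rw [this] at hax; exact lt_irrefl _ hax
  set x' : P := α.get ⟨k - 3, by omega⟩ with hx'def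
  have hx'x : f x' < f x ∧ G.Adj x' x := by
    have h := hstep (k - 3) (by omega)
    have e : α.get ⟨k - 3 + 1, by omega⟩ = x := by
      rw [hxdef]; exact hgeq _ _ _ _ (by omega)
    rw [e] at h; exact h
  have hx'm : x' ≠ m := by
    intro h
    have := hx'x.1
    rw [h] at this
    exact lt_irrefl _ (lt_trans this hxm.1)
  have hNx : ∀ y : P, G.Adj x y ↔ (y = x' ∨ y = m) :=
    nbhr_pair hdeg hx'x.2.symm hxm.2 hx'm
  have hn12 : n₁ ≠ n₂ := by
    intro h
    have hsub : {y : P | G.Adj m y} ⊆ {n₁} := by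
      intro y hy
      rcases (hN y).mp hy with rfl | rfl
      · rfl
      · simp [h]
    have := Set.ncard_le_ncard hsub (Set.finite_singleton _)
    rw [hdeg m, Set.ncard_singleton] at this
    omega
  obtain ⟨w, hwadj, hwm, haw, hwx⟩ :
      ∃ w : P, G.Adj m w ∧ f w < f m ∧ f a < f w ∧ w ≠ x := by
    rcases hx_n with h | h
    · exact ⟨n₂, (hN n₂).mpr (Or.inr rfl), hn₂m, han₂, by rw [h]; exact hn12.symm⟩
    · exact ⟨n₁, (hN n₁).mpr (Or.inl rfl), hn₁m, han₁, by rw [h]; exact hn12⟩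
  -- key stability consequences
  have A0 : ∀ z : P, f x < f z → f z < f m → ¬ G.Adj x z := by
    intro z h1 h2 hadj
    rcases (hNx z).mp hadj with rfl | rfl
    · exact lt_irrefl _ (lt_trans h1 hx'x.1)
    · exact lt_irrefl _ h2
  have A : ∀ z : P, f x < f z → f z < f m →
      ∀ y : P, G.Adj z y → |f y - f z| ≤ f z - f x := by
    intro z h1 h2
    have hxz : x ≠ z := fun h => by rw [h] at h1; exact lt_irrefl _ h1
    rcases hst' x z hxz with hadj | hx | hz
    · exact absurd hadj (A0 z h1 h2)
    · exfalso
      have h := hx m hxm.2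
      rw [abs_of_pos (by linarith), abs_of_pos (by linarith)] at h
      linarith
    · intro y hy
      have h := hz y hy
      rwa [abs_of_pos (sub_pos.mpr h1)] at h
  have B : ∀ z : P, f x < f z → f z < f m →
      ∀ y : P, G.Adj z y → f x < f y ∧ f y ≤ f m := by
    intro z h1 h2 y hy
    have hA := A z h1 h2 y hy
    have habs := abs_le.mp hA
    constructor
    · have hle : f x ≤ f y := by linarith [habs.1]
      rcases lt_or_eq_of_le hle with h | h
      · exact h
      · exfalso
        have : y = x := hfinj y x h.symm
        rw [this] at hy
        exact A0 z h1 h2 hy.symm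
    · by_contra hym
      push_neg at hym
      have hym' : m ≠ y := fun h => by rw [← h] at hym; exact lt_irrefl _ hym
      have hnadj : ¬ G.Adj m y := by
        intro h
        rcases (hN y).mp h with rfl | rfl
        · exact lt_irrefl _ (lt_trans hn₁m hym)
        · exact lt_irrefl _ (lt_trans hn₂m hym)
      rcases hst' m y hym' with hadj | hm | hy'
      · exact hnadj hadj
      · have h := hm x hxm.2.symm
        rw [abs_sub_comm, abs_of_pos (sub_pos.mpr hxm.1),
          abs_of_pos (sub_pos.mpr hym)] at h
        linarith [habs.2]
      · have h := hy' z hy.symm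
        rw [abs_sub_comm, abs_of_pos (sub_pos.mpr (lt_trans h2 hym)),
          abs_of_pos (sub_pos.mpr hym)] at h
        linarith
  have hxw' : x ≠ w := hwx.symm
  have hNm : ∀ y : P, G.Adj m y ↔ (y = x ∨ y = w) :=
    nbhr_pair hdeg hxm.2.symm hwadj hxw'
  -- Parity argument: w must lie below x
  have hwxlt : f w < f x := by
    rcases lt_trichotomy (f w) (f x) with hlt | heq | hgt
    · exact hlt
    · exact absurd (hfinj _ _ heq) hwx
    exfalso
    set F : Set P := {z : P | f x < f z ∧ f z < f m} with hF
    have hFfin : F.Finite := by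
      apply Set.Finite.subset (ball_finite hloc (m : ℝ) (f m - f x))
      intro z hz
      simp only [hF, Set.mem_setOf_eq] at hz ⊢
      have habs : |f z - f m| ≤ f m - f x := by
        rw [abs_sub_comm, abs_of_pos (sub_pos.mpr hz.2)]
        linarith [hz.1]
      rwa [hf z m] at habs
    have hSfin : (insert m F).Finite := hFfin.insert m
    classical
    set SF : Finset P := hSfin.toFinset with hSF
    have hmem : ∀ z : P, z ∈ SF ↔ (z = m ∨ (f x < f z ∧ f z < f m)) := by
      intro z
      rw [hSF, Set.Finite.mem_toFinset]
      simp [hF, Set.mem_insert_iff]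
    set H : SimpleGraph {u : P // u ∈ SF} := G.comap (fun v => (v : P)) with hH
    letI : DecidableRel H.Adj := fun _ _ => Classical.dec _
    have hmSF : m ∈ SF := (hmem m).mpr (Or.inl rfl)
    have hwSF : w ∈ SF := (hmem w).mpr (Or.inr ⟨hgt, hwm⟩)
    have hxSF : x ∉ SF := by
      intro hx
      rcases (hmem x).mp hx with h' | h'
      · rw [h'] at hxm; exact lt_irrefl _ hxm.1
      · exact lt_irrefl _ h'.1
    set vm : {u : P // u ∈ SF} := ⟨m, hmSF⟩ with hvm
    have hdegm : H.degree vm = 1 := by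
      have hnb : H.neighborFinset vm = {⟨w, hwSF⟩} := by
        ext u
        simp only [SimpleGraph.mem_neighborFinset, Finset.mem_singleton]
        constructor
        · intro hu
          have hadj : G.Adj m (u : P) := hu
          rcases (hNm _).mp hadj with h' | h'
          · exact absurd (h' ▸ u.2) hxSF
          · exact Subtype.ext h'
        · intro h'
          have : (u : P) = w := by rw [h']
          show G.Adj m (u : P)
          rw [this]; exact hwadj
      rw [SimpleGraph.degree, hnb, Finset.card_singleton]
    have hdeg2 : ∀ v : {u : P // u ∈ SF}, v ≠ vm → H.degree v = 2 := by
      intro v hv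
      have hvF : f x < f (v : P) ∧ f (v : P) < f m := by
        rcases (hmem (v : P)).mp v.2 with h' | h'
        · exact absurd (Subtype.ext h') hv
        · exact h'
      obtain ⟨p, q, hpq, hset⟩ := Set.ncard_eq_two.mp (hdeg (v : P))
      have hadjp : G.Adj (v : P) p := by
        have : p ∈ {y : P | G.Adj (v : P) y} := by rw [hset]; exact Set.mem_insert _ _
        exact this
      have hadjq : G.Adj (v : P) q := by
        have : q ∈ {y : P | G.Adj (v : P) y} := by
          rw [hset]; exact Set.mem_insert_iff.mpr (Or.inr rfl)
        exact this
      have hmemnb : ∀ y : P, G.Adj (v : P) y → y ∈ SF := by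
        intro y hy
        have hB := B (v : P) hvF.1 hvF.2 y hy
        rcases lt_or_eq_of_le hB.2 with h' | h'
        · exact (hmem y).mpr (Or.inr ⟨hB.1, h'⟩)
        · exact (hmem y).mpr (Or.inl (hfinj _ _ h'))
      have hpSF : p ∈ SF := hmemnb p hadjp
      have hqSF : q ∈ SF := hmemnb q hadjq
      have hnb : H.neighborFinset v = {⟨p, hpSF⟩, ⟨q, hqSF⟩} := by
        ext u
        simp only [SimpleGraph.mem_neighborFinset, Finset.mem_insert, Finset.mem_singleton]
        constructor
        · intro hu
          have hadj : G.Adj (v : P) (u : P) := hu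
          have : (u : P) ∈ {y : P | G.Adj (v : P) y} := hadj
          rw [hset] at this
          rcases this with h' | h'
          · exact Or.inl (Subtype.ext h')
          · exact Or.inr (Subtype.ext h')
        · intro h'
          rcases h' with h' | h'
          · show G.Adj (v : P) (u : P)
            rw [show (u : P) = p from by rw [h']]; exact hadjp
          · show G.Adj (v : P) (u : P)
            rw [show (u : P) = q from by rw [h']]; exact hadjq
      rw [SimpleGraph.degree, hnb]
      rw [Finset.card_insert_of_notMem (by simp [Subtype.ext_iff, hpq]), Finset.card_singleton]
    have hsum := SimpleGraph.sum_degrees_eq_twice_card_edges H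
    have herase : ∑ v ∈ Finset.univ.erase vm, H.degree v
        = 2 * (Finset.univ.erase vm).card := by
      rw [Finset.sum_congr rfl (fun v hv => hdeg2 v (Finset.mem_erase.mp hv).1),
        Finset.sum_const, smul_eq_mul, mul_comm]
    have htot : ∑ v : {u : P // u ∈ SF}, H.degree v
        = 1 + 2 * (Finset.univ.erase vm).card := by
      rw [← Finset.add_sum_erase Finset.univ (fun v => H.degree v) (Finset.mem_univ vm)]
      beta_reduce
      rw [hdegm, herase]
    rw [htot] at hsum
    omega
  -- w is not a vertex of α
  have hwα : ∀ (i : ℕ) (hi : i < k), α.get ⟨i, hi⟩ ≠ w := by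
    intro i hi heq
    by_cases hik1 : i = k - 1
    · have hm' : α.get ⟨i, hi⟩ = m := by
        rw [hgeq i (k-1) hi (by omega) hik1]; exact hgetlast
      rw [heq] at hm'; rw [← hm'] at hwm; exact lt_irrefl _ hwm
    by_cases hik2 : i = k - 2
    · have hx2 : α.get ⟨i, hi⟩ = x := by
        rw [hxdef]; exact hgeq _ _ _ _ hik2
      rw [heq] at hx2; exact hwx hx2
    by_cases hi0 : i = 0
    · have ha2 : α.get ⟨i, hi⟩ = a := by
        rw [← hget0]; exact hgeq _ _ _ _ hi0
      rw [heq] at ha2; rw [← ha2] at haw; exact lt_irrefl _ haw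
    -- interior: 1 ≤ i ≤ k - 3
    have hstepA := hstep (i-1) (by omega)
    have hstepB := hstep i (by omega)
    have eA : α.get ⟨i - 1 + 1, by omega⟩ = α.get ⟨i, hi⟩ := hgeq _ _ _ _ (by omega)
    rw [eA] at hstepA
    have hne2 : α.get ⟨i-1, by omega⟩ ≠ α.get ⟨i+1, by omega⟩ := by
      intro h
      have hmm := hmono (i-1) (i+1) (by omega) (by omega) (by omega)
      rw [h] at hmm; exact lt_irrefl _ hmm
    have hpair := nbhr_pair hdeg hstepA.2.symm hstepB.2 hne2
    have hadjm : G.Adj (α.get ⟨i, hi⟩) m := by rw [heq]; exact hwadj.symm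
    rcases (hpair m).mp hadjm with h' | h'
    · have hmm := hmono (i-1) (k-1) (by omega) (by omega) (by omega)
      rw [← h'] at hmm
      rw [hgetlast] at hmm
      exact lt_irrefl _ hmm
    · have hmm := hmono (i+1) (k-1) (by omega) (by omega) (by omega)
      rw [← h'] at hmm
      rw [hgetlast] at hmm
      exact lt_irrefl _ hmm
  -- descent along α
  have hdesc : ∀ (j : ℕ), j ≤ k - 2 → f w < f (α.get ⟨k - 2 - j, by omega⟩) := by
    intro j
    induction j with
    | zero =>
      intro _
      have e2 : α.get ⟨k - 2 - 0, by omega⟩ = x := by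
        rw [hxdef]; exact hgeq _ _ _ _ (by omega)
      rw [e2]; exact hwxlt
    | succ j ih =>
      intro hj
      have ihv := ih (by omega)
      have hstepA := hstep (k - 2 - j - 1) (by omega)
      have hstepB := hstep (k - 2 - j) (by omega)
      have eA : α.get ⟨k - 2 - j - 1 + 1, by omega⟩ = α.get ⟨k - 2 - j, by omega⟩ :=
        hgeq _ _ _ _ (by omega)
      rw [eA] at hstepA
      have hne2 : α.get ⟨k - 2 - j - 1, by omega⟩ ≠ α.get ⟨k - 2 - j + 1, by omega⟩ := by
        intro h
        have hmm := hmono (k - 2 - j - 1) (k - 2 - j + 1) (by omega) (by omega) (by omega)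
        rw [h] at hmm; exact lt_irrefl _ hmm
      have hpair := nbhr_pair hdeg hstepA.2.symm hstepB.2 hne2
      have hzm : f (α.get ⟨k - 2 - j, by omega⟩) < f m := by
        have hmm := hmono (k - 2 - j) (k - 1) (by omega) (by omega) (by omega)
        rwa [hgetlast] at hmm
      have hwz : w ≠ α.get ⟨k - 2 - j, by omega⟩ :=
        fun h => hwα (k - 2 - j) (by omega) h.symm
      rcases hst' w (α.get ⟨k - 2 - j, by omega⟩) hwz with hadj | hw_e | hz_e
      · rcases (hpair w).mp hadj.symm with h' | h'
        · exact absurd h'.symm (hwα (k - 2 - j - 1) (by omega))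
        · exact absurd h'.symm (hwα (k - 2 - j + 1) (by omega))
      · exfalso
        have h := hw_e m hwadj.symm
        rw [abs_of_pos (sub_pos.mpr hwm), abs_of_pos (sub_pos.mpr ihv)] at h
        linarith
      · have h := hz_e _ hstepA.2.symm
        rw [abs_sub_comm, abs_of_pos (sub_pos.mpr hstepA.1),
          abs_of_pos (sub_pos.mpr ihv)] at h
        have hge : f w ≤ f (α.get ⟨k - 2 - j - 1, by omega⟩) := by linarith
        have hne3 : f w ≠ f (α.get ⟨k - 2 - j - 1, by omega⟩) := by
          intro h'
          exact hwα (k - 2 - j - 1) (by omega) (hfinj _ _ h'.symm)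
        have e3 : α.get ⟨k - 2 - (j+1), by omega⟩ = α.get ⟨k - 2 - j - 1, by omega⟩ :=
          hgeq _ _ _ _ (by omega)
        rw [e3]
        exact lt_of_le_of_ne hge hne3
  have hfin := hdesc (k - 2) (le_refl _)
  have e4 : α.get ⟨k - 2 - (k - 2), by omega⟩ = a := by
    rw [← hget0]; exact hgeq _ _ _ _ (by omega)
  rw [e4] at hfin
  exact lt_irrefl _ (lt_trans haw hfin)


lemma other_nbhr (hdeg : ∀ x : P, {y : P | G.Adj x y}.ncard = 2)
    {z p : P} (hp : G.Adj z p) :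
    ∃ q : P, G.Adj z q ∧ q ≠ p ∧ ∀ y : P, G.Adj z y ↔ (y = p ∨ y = q) := by
  obtain ⟨u, v, huv, hset⟩ := Set.ncard_eq_two.mp (hdeg z)
  have hpmem : p ∈ ({u, v} : Set P) := hset ▸ hp
  have hu : G.Adj z u := by
    have : u ∈ {y : P | G.Adj z y} := by rw [hset]; exact Set.mem_insert _ _
    exact this
  have hv : G.Adj z v := by
    have : v ∈ {y : P | G.Adj z y} := by
      rw [hset]; exact Set.mem_insert_iff.mpr (Or.inr rfl)
    exact this
  rcases hpmem with rfl | hpv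
  · refine ⟨v, hv, huv.symm, ?_⟩
    intro y
    constructor
    · intro hy
      have : y ∈ ({p, v} : Set P) := hset ▸ hy
      simpa using this
    · rintro (rfl | rfl); exacts [hp, hv]
  · simp only [Set.mem_singleton_iff] at hpv
    subst hpv
    refine ⟨u, hu, huv, ?_⟩
    intro y
    constructor
    · intro hy
      have : y ∈ ({u, p} : Set P) := hset ▸ hy
      rcases this with rfl | h'
      · exact Or.inr rfl
      · simp only [Set.mem_singleton_iff] at h'; exact Or.inl h'
    · rintro (rfl | rfl); exacts [hp, hu]


/-- Combining monotone paths: if `a < b < c < d`, the intervals `[a,b]` and `[c,d]` are both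
longer than `[b,c]`, and a 2-regular stable multi-matching has a monotone path from `a` to `b`
and one from `c` to `d`, then it has a monotone path from `a` to `d` containing both. -/
theorem combine_monotone_paths
    (P : Set ℝ) (hloc : ∀ K : Set ℝ, IsCompact K → (P ∩ K).Finite)
    (G : SimpleGraph P)
    (hdeg : ∀ x : P, {y : P | G.Adj x y}.ncard = 2)
    (hstable : IsStableMultiMatching P G)
    (a b c d : P)
    (hab : (a : ℝ) < b) (hbc : (b : ℝ) < c) (hcd : (c : ℝ) < d)
    (h1 : (c : ℝ) - b < (b : ℝ) - a) (h2 : (c : ℝ) - b < (d : ℝ) - c)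
    (α : List P) (hα : IsMonotonePath P G α)
    (hαa : α.head? = some a) (hαb : α.getLast? = some b)
    (δ : List P) (hδ : IsMonotonePath P G δ)
    (hδc : δ.head? = some c) (hδd : δ.getLast? = some d) :
    ∃ L : List P, IsMonotonePath P G L ∧ L.head? = some a ∧ L.getLast? = some d ∧
      (∀ v ∈ α, v ∈ L) ∧ (∀ v ∈ δ, v ∈ L) := by
  have hfinIoo : ∀ u v : ℝ, (P ∩ Set.Ioo u v).Finite := by
    intro u v
    apply Set.Finite.subset (hloc (Set.Icc u v) isCompact_Icc)
    intro z hz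
    exact ⟨hz.1, Set.Ioo_subset_Icc_self hz.2⟩
  have main : ∀ n : ℕ, ∀ b c : P, (P ∩ Set.Ioo (b:ℝ) (c:ℝ)).ncard = n →
      (a:ℝ) < b → (b:ℝ) < c → (c:ℝ) < d →
      (c:ℝ) - b < (b:ℝ) - a → (c:ℝ) - b < (d:ℝ) - c →
      ∀ α δ : List P, IsMonotonePath P G α → α.head? = some a → α.getLast? = some b →
        IsMonotonePath P G δ → δ.head? = some c → δ.getLast? = some d →
        ∃ L : List P, IsMonotonePath P G L ∧ L.head? = some a ∧ L.getLast? = some d ∧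
          (∀ v ∈ α, v ∈ L) ∧ (∀ v ∈ δ, v ∈ L) := by
    intro n
    induction n using Nat.strong_induction_on with
    | _ n IH =>
    intro b c hn hab hbc hcd h1 h2 α δ hα hαa hαb hδ hδc hδd
    have habs_g : |(c:ℝ) - b| = (c:ℝ) - b := abs_of_pos (by linarith)
    have hdone : G.Adj b c →
        ∃ L : List P, IsMonotonePath P G L ∧ L.head? = some a ∧ L.getLast? = some d ∧
          (∀ v ∈ α, v ∈ L) ∧ (∀ v ∈ δ, v ∈ L) := by
      intro hadj
      refine ⟨α ++ δ, ⟨by simp [hα.1], ?_⟩, ?_, ?_, ?_, ?_⟩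
      · refine List.IsChain.append hα.2 hδ.2 ?_
        intro p hp q hq
        rw [hαb, Option.mem_def, Option.some_inj] at hp
        rw [hδc, Option.mem_def, Option.some_inj] at hq
        subst hp; subst hq
        exact ⟨hbc, hadj⟩
      · rw [List.head?_append, hαa]; rfl
      · rw [List.getLast?_append, hδd]; rfl
      · intro v hv; exact List.mem_append.mpr (Or.inl hv)
      · intro v hv; exact List.mem_append.mpr (Or.inr hv)
    have hbc_ne : b ≠ c := fun h => by rw [h] at hbc; exact lt_irrefl _ hbc
    rcases hstable b c hbc_ne with hadj | hbe | hce
    · exact hdone hadj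
    · -- all edges at b are short
      have hab_ne : a ≠ b := fun h => by rw [h] at hab; exact lt_irrefl _ hab
      obtain ⟨x, hxlt, hxadj⟩ := exists_penult' hα.1 hα.2 hαa hαb hab_ne
      obtain ⟨w, hwadj, hwx, hNb⟩ := other_nbhr hdeg hxadj.symm
      have hwb := hbe w hwadj
      have hxb := hbe x hxadj.symm
      rw [habs_g] at hwb hxb
      have hax : (a:ℝ) < x := by
        have h' := abs_le.mp hxb
        linarith [h'.1]
      have haw : (a:ℝ) < w := by
        have h' := abs_le.mp hwb
        linarith [h'.1]
      rcases lt_trichotomy (w:ℝ) (b:ℝ) with hlt | heq | hgt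
      · exact (bad_config hloc hdeg hstable (fun u : P => (u:ℝ))
          (fun u v => rfl) α hα.1 hα.2 a b hαa hαb x w hNb hxlt hlt hax haw).elim
      · exact absurd (Subtype.ext heq) hwadj.ne'
      · have hwc : (w:ℝ) ≤ c := by
          have h' := abs_le.mp hwb
          linarith [h'.2]
        rcases eq_or_lt_of_le hwc with heqc | hltc
        · have hweq : w = c := Subtype.ext heqc
          exact hdone (hweq ▸ hwadj)
        · have hss : P ∩ Set.Ioo (w:ℝ) (c:ℝ) ⊂ P ∩ Set.Ioo (b:ℝ) (c:ℝ) := by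
            constructor
            · intro z hz; exact ⟨hz.1, lt_trans hgt hz.2.1, hz.2.2⟩
            · intro hsub
              have hwmem : (w:ℝ) ∈ P ∩ Set.Ioo (b:ℝ) (c:ℝ) := ⟨w.2, hgt, hltc⟩
              exact lt_irrefl _ (hsub hwmem).2.1
          have hlt_n : (P ∩ Set.Ioo (w:ℝ) (c:ℝ)).ncard < n := by
            rw [← hn]; exact Set.ncard_lt_ncard hss (hfinIoo _ _)
          have hα' : IsMonotonePath P G (α ++ [w]) := by
            refine ⟨by simp, ?_⟩
            refine List.IsChain.append hα.2 (List.isChain_singleton w) ?_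
            intro p hp q hq
            rw [hαb, Option.mem_def, Option.some_inj] at hp
            simp only [List.head?_cons, Option.mem_def, Option.some_inj] at hq
            subst hp; subst hq
            exact ⟨hgt, hwadj⟩
          have hαa' : (α ++ [w]).head? = some a := by rw [List.head?_append, hαa]; rfl
          have hαb' : (α ++ [w]).getLast? = some w := by rw [List.getLast?_append]; rfl
          obtain ⟨L, hL1, hL2, hL3, hL4, hL5⟩ :=
            IH _ hlt_n w c rfl haw hltc hcd (by linarith) (by linarith)
              (α ++ [w]) δ hα' hαa' hαb' hδ hδc hδd
          exact ⟨L, hL1, hL2, hL3, fun v hv => hL4 v (List.mem_append.mpr (Or.inl hv)), hL5⟩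
    · -- all edges at c are short
      have hcd_ne : c ≠ d := fun h => by rw [h] at hcd; exact lt_irrefl _ hcd
      obtain ⟨y, hylt, hyadj⟩ := exists_second' hδ.1 hδ.2 hδc hδd hcd_ne
      obtain ⟨u, huadj, huy, hNc⟩ := other_nbhr hdeg hyadj
      have huc := hce u huadj
      have hyc := hce y hyadj
      rw [habs_g] at huc hyc
      have hyd : (y:ℝ) < d := by
        have h' := abs_le.mp hyc
        linarith [h'.2]
      have hud : (u:ℝ) < d := by
        have h' := abs_le.mp huc
        linarith [h'.2]
      rcases lt_trichotomy (c:ℝ) (u:ℝ) with hgt | heq | hlt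
      · have hδrev_ne : δ.reverse ≠ [] := by simp [hδ.1]
        have hch : δ.reverse.Chain'
            (fun p q : P => (fun z : P => -(z:ℝ)) p < (fun z : P => -(z:ℝ)) q ∧ G.Adj p q) := by
          apply List.isChain_reverse.mpr
          exact hδ.2.imp (fun p q h => ⟨by simpa using neg_lt_neg h.1, h.2.symm⟩)
        exact (bad_config hloc hdeg hstable (fun z : P => -(z:ℝ))
          (fun p q => by rw [neg_sub_neg, abs_sub_comm]) δ.reverse hδrev_ne hch d c
          (by rw [List.head?_reverse, hδd]) (by rw [List.getLast?_reverse, hδc])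
          y u hNc (neg_lt_neg hylt) (neg_lt_neg hgt) (neg_lt_neg hyd) (neg_lt_neg hud)).elim
      · exact absurd (Subtype.ext heq) huadj.ne
      · have hub : (b:ℝ) ≤ u := by
          have h' := abs_le.mp huc
          linarith [h'.1]
        rcases eq_or_lt_of_le hub with heqb | hltb
        · have heq2 : b = u := Subtype.ext heqb
          rw [← heq2] at huadj
          exact hdone huadj.symm
        · have hss : P ∩ Set.Ioo (b:ℝ) (u:ℝ) ⊂ P ∩ Set.Ioo (b:ℝ) (c:ℝ) := by
            constructor
            · intro z hz; exact ⟨hz.1, hz.2.1, lt_trans hz.2.2 hlt⟩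
            · intro hsub
              have humem : (u:ℝ) ∈ P ∩ Set.Ioo (b:ℝ) (c:ℝ) := ⟨u.2, hltb, hlt⟩
              exact lt_irrefl _ (hsub humem).2.2
          have hlt_n : (P ∩ Set.Ioo (b:ℝ) (u:ℝ)).ncard < n := by
            rw [← hn]; exact Set.ncard_lt_ncard hss (hfinIoo _ _)
          have hδ' : IsMonotonePath P G ([u] ++ δ) := by
            refine ⟨by simp, ?_⟩
            refine List.IsChain.append (List.isChain_singleton u) hδ.2 ?_
            intro p hp q hq
            simp only [List.getLast?_singleton, Option.mem_def, Option.some_inj] at hp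
            rw [hδc, Option.mem_def, Option.some_inj] at hq
            subst hp; subst hq
            exact ⟨hlt, huadj.symm⟩
          have hδc' : ([u] ++ δ).head? = some u := rfl
          have hδd' : ([u] ++ δ).getLast? = some d := by rw [List.getLast?_append, hδd]; rfl
          obtain ⟨L, hL1, hL2, hL3, hL4, hL5⟩ :=
            IH _ hlt_n b u rfl hab hltb (lt_trans hlt hcd) (by linarith) (by linarith)
              α ([u] ++ δ) hα hαa hαb hδ' hδc' hδd'
          exact ⟨L, hL1, hL2, hL3, hL4, fun v hv => hL5 v (List.mem_append.mpr (Or.inr hv))⟩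
  exact main _ b c rfl hab hbc hcd h1 h2 α δ hα hαa hαb hδ hδc hδd
end

section
/- Let $P$ be a locally finite subset of $\mathbb{R}$ and let $G$ be a simple graph with vertex set $P$ that is a direction-stable matching in which every vertex has degree exactly $2$. Suppose $x \in P$ is a right-beak with edges $\{x,y\}$ and $\{x,z\}$ where $x < y < z$, and suppose the connected component of $x$ in $G$ contains some vertex $w < x$. Then the neighbour of $y$ other than $x$ lies strictly to the left of $x$ (in particular $y$ is a left-beak), and no vertex of the connected component of $x$ lies strictly between $x$ and $y$. -/
/-- Vertices reachable from a vertex of an adjacency-closed set stay in the set. -/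
private lemma reach_mem {V : Type*} {G : SimpleGraph V} (A : Set V)
    (hA : ∀ a ∈ A, ∀ b, G.Adj a b → b ∈ A) :
    ∀ {v w : V}, G.Reachable v w → v ∈ A → w ∈ A := by
  intro v w h
  obtain ⟨p⟩ := h
  induction p with
  | nil => exact id
  | cons hadj _ ih => exact fun hv => ih (hA _ hv _ hadj)

/-- In a 2-regular graph, every vertex adjacent to `v` has a unique "other neighbour". -/
private lemma other_nbr {P : Set ℝ} {G : SimpleGraph P}
    (hdeg : ∀ v : P, {u : P | G.Adj v u}.ncard = 2)
    {v a : P} (ha : G.Adj v a) :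
    ∃ b, G.Adj v b ∧ b ≠ a ∧ ∀ t, G.Adj v t → t = a ∨ t = b := by
  obtain ⟨a', b', hne, hset⟩ := Set.ncard_eq_two.mp (hdeg v)
  have H : ∀ s, G.Adj v s → s = a' ∨ s = b' := by
    intro s hs
    have : s ∈ ({a', b'} : Set P) := by rw [← hset]; exact hs
    simpa using this
  have hadj' : ∀ s : P, s = a' ∨ s = b' → G.Adj v s := by
    intro s hs
    have : s ∈ {u : P | G.Adj v u} := by rw [hset]; simpa using hs
    exact this
  rcases H a ha with rfl | rfl
  · exact ⟨b', hadj' _ (Or.inr rfl), hne.symm, fun t ht => H t ht⟩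
  · exact ⟨a', hadj' _ (Or.inl rfl), hne, fun t ht => (H t ht).symm⟩

/-- In a 2-regular graph, two distinct neighbours of `v` are all of them. -/
private lemma nbrs_pair {P : Set ℝ} {G : SimpleGraph P}
    (hdeg : ∀ v : P, {u : P | G.Adj v u}.ncard = 2)
    {v a b : P} (hab : b ≠ a) (ha : G.Adj v a) (hb : G.Adj v b) :
    ∀ t, G.Adj v t → t = a ∨ t = b := by
  obtain ⟨b₂, _, _, H⟩ := other_nbr hdeg ha
  rcases H b hb with rfl | rfl
  · exact absurd rfl hab
  · exact H

/-- Every vertex of a 2-regular graph has exactly two neighbours. -/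
private lemma two_nbrs {P : Set ℝ} {G : SimpleGraph P}
    (hdeg : ∀ v : P, {u : P | G.Adj v u}.ncard = 2) (v : P) :
    ∃ a b : P, a ≠ b ∧ G.Adj v a ∧ G.Adj v b ∧ ∀ t, G.Adj v t → t = a ∨ t = b := by
  obtain ⟨a, b, hne, hset⟩ := Set.ncard_eq_two.mp (hdeg v)
  have hadj : ∀ s : P, s = a ∨ s = b → G.Adj v s := by
    intro s hs
    have : s ∈ {u : P | G.Adj v u} := by rw [hset]; simpa using hs
    exact this
  refine ⟨a, b, hne, hadj a (Or.inl rfl), hadj b (Or.inr rfl), fun t ht => ?_⟩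
  have : t ∈ ({a, b} : Set P) := by rw [← hset]; exact ht
  simpa using this

/-- Handshake-type parity: the sum over `s ∈ T` of the number of neighbours of `s`
inside `T` is even. -/
private lemma even_sum_adj {P : Set ℝ} (G : SimpleGraph P) (T : Finset P) :
    Even (∑ s ∈ T, {t : P | t ∈ T ∧ G.Adj s t}.ncard) := by
  classical
  have hconv : ∀ s : P, {t : P | t ∈ T ∧ G.Adj s t}.ncard
      = (T.filter (fun t => G.Adj s t)).card := by
    intro s
    rw [← Set.ncard_coe_finset]
    congr 1
    ext t
    simp
  simp only [hconv]
  set R := (T ×ˢ T).filter (fun p : P × P => G.Adj p.1 p.2) with hR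
  have key : ∑ s ∈ T, (T.filter (fun t => G.Adj s t)).card = R.card := by
    rw [hR, Finset.card_filter, Finset.sum_product]
    refine Finset.sum_congr rfl fun s _ => ?_
    rw [Finset.card_filter]
  rw [key]
  set R₁ := R.filter (fun p : P × P => (p.1 : ℝ) < (p.2 : ℝ)) with hR₁
  set R₂ := R.filter (fun p : P × P => ¬ (p.1 : ℝ) < (p.2 : ℝ)) with hR₂
  have hsplit : R₁.card + R₂.card = R.card :=
    Finset.card_filter_add_card_filter_not _
  have hmemR : ∀ p : P × P, p ∈ R → G.Adj p.1 p.2 ∧ p.1 ∈ T ∧ p.2 ∈ T := by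
    intro p hp
    rw [hR, Finset.mem_filter, Finset.mem_product] at hp
    exact ⟨hp.2, hp.1.1, hp.1.2⟩
  have hcards : R₁.card = R₂.card := by
    refine Finset.card_bij' (fun p _ => (p.2, p.1)) (fun p _ => (p.2, p.1)) ?_ ?_ ?_ ?_
    · intro p hp
      rw [hR₁, Finset.mem_filter] at hp
      obtain ⟨hpR, hlt⟩ := hp
      obtain ⟨hadj, h1, h2⟩ := hmemR p hpR
      rw [hR₂, Finset.mem_filter]
      refine ⟨?_, by simp only; linarith⟩
      rw [hR, Finset.mem_filter, Finset.mem_product]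
      exact ⟨⟨h2, h1⟩, hadj.symm⟩
    · intro p hp
      rw [hR₂, Finset.mem_filter] at hp
      obtain ⟨hpR, hlt⟩ := hp
      obtain ⟨hadj, h1, h2⟩ := hmemR p hpR
      have hne : (p.1 : ℝ) ≠ (p.2 : ℝ) := by
        intro h
        exact hadj.ne (Subtype.ext h)
      have hgt : (p.2 : ℝ) < (p.1 : ℝ) := by
        rcases lt_trichotomy (p.1 : ℝ) (p.2 : ℝ) with h | h | h
        · exact absurd h hlt
        · exact absurd h hne
        · exact h
      rw [hR₁, Finset.mem_filter]
      refine ⟨?_, hgt⟩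
      rw [hR, Finset.mem_filter, Finset.mem_product]
      exact ⟨⟨h2, h1⟩, hadj.symm⟩
    · intro p _; rfl
    · intro p _; rfl
  exact ⟨R₁.card, by omega⟩

/-- If exactly one vertex of `T` has exactly one neighbour in `T` and all others have two,
we get a parity contradiction. -/
private lemma parity_contra {P : Set ℝ} (G : SimpleGraph P) (T : Finset P)
    (s₀ : P) (hs₀ : s₀ ∈ T)
    (h1 : {t : P | t ∈ T ∧ G.Adj s₀ t}.ncard = 1)
    (h2 : ∀ s ∈ T, s ≠ s₀ → {t : P | t ∈ T ∧ G.Adj s t}.ncard = 2) : False := by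
  classical
  have hpar := even_sum_adj G T
  rw [← Finset.sum_erase_add T _ hs₀, h1] at hpar
  have hsum : ∑ s ∈ T.erase s₀, {t : P | t ∈ T ∧ G.Adj s t}.ncard
      = 2 * (T.erase s₀).card := by
    rw [Finset.sum_congr rfl
      (fun s hs => h2 s (Finset.mem_of_mem_erase hs) (Finset.ne_of_mem_erase hs)),
      Finset.sum_const, smul_eq_mul, mul_comm]
  rw [hsum] at hpar
  rcases hpar with ⟨m, hm⟩
  omega

/-- In a 2-regular direction-stable matching on a locally finite `P ⊆ ℝ`, if `x` is a
right-beak with edges to `y` and `z` (where `x < y < z`), and the component of `x` contains a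
vertex to the left of `x`, then the other neighbour of `y` lies strictly to the left of `x`
(so `y` is a left-beak), and no vertex of the component of `x` lies strictly between `x`
and `y`. -/
theorem right_beak_followed_by_left_beak
    (P : Set ℝ) (hloc : ∀ K : Set ℝ, IsCompact K → (P ∩ K).Finite)
    (G : SimpleGraph P)
    (hdeg : ∀ v : P, {u : P | G.Adj v u}.ncard = 2)
    (hstable : IsDirectionStableMatching P G)
    (x y z : P)
    (hxy : (x : ℝ) < y) (hyz : (y : ℝ) < z)
    (haxy : G.Adj x y) (haxz : G.Adj x z)
    (w : P) (hw : G.Reachable x w) (hwx : (w : ℝ) < x) :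
    (∀ u : P, G.Adj y u → u ≠ x → (u : ℝ) < x) ∧
    (∀ v : P, G.Reachable x v → ¬ ((x : ℝ) < v ∧ (v : ℝ) < y)) := by
  classical
  have hxz : (x : ℝ) < z := hxy.trans hyz
  have vne : ∀ {a b : P}, (a : ℝ) < (b : ℝ) → a ≠ b :=
    fun h e => ne_of_lt h (congrArg Subtype.val e)
  have hx_nbrs : ∀ t, G.Adj x t → t = y ∨ t = z :=
    nbrs_pair hdeg (vne hyz).symm haxy haxz
  have hayx : G.Adj y x := haxy.symm
  -- Part 1
  have part1 : ∀ u : P, G.Adj y u → u ≠ x → (u : ℝ) < x := by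
    intro u hyu hux
    by_contra hcon
    push_neg at hcon
    have hxu : (x : ℝ) < u :=
      lt_of_le_of_ne hcon (fun h => hux (Subtype.ext h.symm))
    have hy_nbrs : ∀ t, G.Adj y t → t = x ∨ t = u :=
      nbrs_pair hdeg (fun h : u = x => hux h) hayx hyu
    rcases le_or_gt (u : ℝ) (z : ℝ) with huz | hzu
    · -- `x < u ≤ z` : parity argument traps the component in `[x, z]`.
      obtain ⟨c, hzc, hcx, hz_nbrs⟩ := other_nbr hdeg haxz.symm
      obtain ⟨c', hcc', hc'z, hc_nbrs⟩ := other_nbr hdeg hzc.symm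
      set A : Set P := {s : P | (x : ℝ) ≤ (s : ℝ) ∧ (s : ℝ) ≤ (z : ℝ)} with hAdef
      have hxA : x ∈ A := ⟨le_refl _, hxz.le⟩
      have hyA : y ∈ A := ⟨hxy.le, hyz.le⟩
      have hzA : z ∈ A := ⟨hxz.le, le_refl _⟩
      have huA : u ∈ A := ⟨hxu.le, huz⟩
      -- classification of boundary pairs
      have classify : ∀ s t : P, s ∈ A → G.Adj s t → t ∉ A →
          (s = z ∧ t = c) ∨ (s = c ∧ t = c') := by
        intro s t hs hst htA
        by_cases hsx : s = x
        · subst hsx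
          rcases hx_nbrs t hst with rfl | rfl
          · exact absurd hyA htA
          · exact absurd hzA htA
        by_cases hsy : s = y
        · subst hsy
          rcases hy_nbrs t hst with rfl | rfl
          · exact absurd hxA htA
          · exact absurd huA htA
        by_cases hsz : s = z
        · subst hsz
          rcases hz_nbrs t hst with rfl | rfl
          · exact absurd hxA htA
          · exact Or.inl ⟨rfl, rfl⟩
        have hxs : (x : ℝ) < s :=
          lt_of_le_of_ne hs.1 (fun h => hsx (Subtype.ext h.symm))
        have hsz' : (s : ℝ) < z :=
          lt_of_le_of_ne hs.2 (fun h => hsz (Subtype.ext h))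
        rcases lt_trichotomy (t : ℝ) (s : ℝ) with hts | hts | hts
        · -- left neighbours of `s` lie in `(x, s)`, so `t ∈ A`: contradiction
          exfalso
          rcases hstable x s hxs with h | h | h
          · rcases hx_nbrs s h with rfl | rfl
            · exact hsy rfl
            · exact hsz rfl
          · have := h z haxz hxz
            linarith
          · have := h t hst hts
            exact htA ⟨by linarith, by linarith⟩
        · exact absurd (Subtype.ext hts) hst.ne'
        · -- right neighbours beyond `z` force `s = c`
          have htz : (z : ℝ) < t := by
            by_contra hle
            push_neg at hle
            exact htA ⟨by linarith, hle⟩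
          by_cases hadjz : G.Adj s z
          · rcases hz_nbrs s hadjz.symm with rfl | rfl
            · exact absurd rfl hsx
            · rcases hc_nbrs t hst with rfl | rfl
              · exact absurd hzA htA
              · exact Or.inr ⟨rfl, rfl⟩
          · exfalso
            rcases hstable s z hsz' with h | h | h
            · exact hadjz h
            · have := h t hst hts
              linarith
            · have := h x haxz.symm hxz
              linarith
      -- A is finite
      have hAfin : A.Finite := by
        have hsub : A ⊆ Subtype.val ⁻¹' (P ∩ Set.Icc (x : ℝ) (z : ℝ)) :=
          fun s hs => ⟨s.2, hs.1, hs.2⟩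
        exact Set.Finite.subset
          ((hloc _ isCompact_Icc).preimage (Subtype.val_injective.injOn)) hsub
      set T := hAfin.toFinset with hTdef
      have hmemT : ∀ s : P, s ∈ T ↔ s ∈ A := fun s => Set.Finite.mem_toFinset _
      -- A is adjacency-closed
      have hclosed : ∀ s ∈ A, ∀ t, G.Adj s t → t ∈ A := by
        by_contra hB
        push_neg at hB
        obtain ⟨s₀, hs₀, t₀, hadj₀, ht₀⟩ := hB
        have main : ∀ (s₁ p q : P), s₁ ∈ A → p ∈ A → q ∉ A → G.Adj s₁ p →
            (∀ t, G.Adj s₁ t → t = p ∨ t = q) →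
            (∀ s t : P, s ∈ A → G.Adj s t → t ∉ A → s = s₁) → False := by
          intro s₁ p q hs₁A hpA hqA hadjp hnbrs huniq
          apply parity_contra G T s₁ ((hmemT s₁).mpr hs₁A)
          · have hset : {t : P | t ∈ T ∧ G.Adj s₁ t} = {p} := by
              ext t
              simp only [Set.mem_setOf_eq, Set.mem_singleton_iff, hmemT]
              constructor
              · rintro ⟨htA, hadj⟩
                rcases hnbrs t hadj with rfl | rfl
                · rfl
                · exact absurd htA hqA
              · rintro rfl
                exact ⟨hpA, hadjp⟩
            rw [hset, Set.ncard_singleton]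
          · intro s hsT hsne
            have hsA := (hmemT s).mp hsT
            obtain ⟨a, b, hab, ha, hb, Hs⟩ := two_nbrs hdeg s
            have haA : a ∈ A := by
              by_contra h
              exact hsne (huniq s a hsA ha h)
            have hbA : b ∈ A := by
              by_contra h
              exact hsne (huniq s b hsA hb h)
            have hset : {t : P | t ∈ T ∧ G.Adj s t} = {a, b} := by
              ext t
              simp only [Set.mem_setOf_eq, Set.mem_insert_iff, Set.mem_singleton_iff, hmemT]
              constructor
              · rintro ⟨_, hadj⟩
                exact Hs t hadj
              · rintro (rfl | rfl)
                exacts [⟨haA, ha⟩, ⟨hbA, hb⟩]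
            rw [hset]
            exact Set.ncard_pair hab
        rcases classify s₀ t₀ hs₀ hadj₀ ht₀ with ⟨h1, h2⟩ | ⟨h1, h2⟩
        · -- boundary pair is (z, c), with c ∉ A
          have hcA : c ∉ A := by rw [h2] at ht₀; exact ht₀
          have huniq : ∀ s t : P, s ∈ A → G.Adj s t → t ∉ A → s = z := by
            intro s t hs h ht
            rcases classify s t hs h ht with ⟨hh, _⟩ | ⟨hh1, _⟩
            · exact hh
            · exfalso; rw [hh1] at hs; exact hcA hs
          exact main z x c hzA hxA hcA haxz.symm hz_nbrs huniq
        · -- boundary pair is (c, c'), with c ∈ A and c' ∉ A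
          have hcA : c ∈ A := by rw [h1] at hs₀; exact hs₀
          have hc'A : c' ∉ A := by rw [h2] at ht₀; exact ht₀
          have huniq : ∀ s t : P, s ∈ A → G.Adj s t → t ∉ A → s = c := by
            intro s t hs h ht
            rcases classify s t hs h ht with ⟨_, hh2⟩ | ⟨hh, _⟩
            · exfalso; rw [hh2] at ht; exact ht hcA
            · exact hh
          exact main c z c' hcA hzA hc'A hzc.symm hc_nbrs huniq
      have hwA : w ∈ A := reach_mem A hclosed hw hxA
      exact absurd hwA.1 (not_le.mpr hwx)
    · -- `u > z` : direct stability contradiction on the pair (y, z)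
      rcases hstable y z hyz with h | h | h
      · rcases hy_nbrs z h with rfl | rfl
        · exact absurd hxz (lt_irrefl _)
        · exact absurd hzu (lt_irrefl _)
      · have hyu' : (y : ℝ) < u := by linarith
        have := h u hyu hyu'
        linarith
      · have := h x haxz.symm hxz
        linarith
  -- Part 2
  have part2 : ∀ v : P, G.Reachable x v → ¬ ((x : ℝ) < v ∧ (v : ℝ) < y) := by
    rintro v hv ⟨h1, h2⟩
    set B : Set P := {s : P | (x : ℝ) < (s : ℝ) ∧ (s : ℝ) < (y : ℝ)} with hBdef
    have hBclosed : ∀ s ∈ B, ∀ t, G.Adj s t → t ∈ B := by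
      intro s hs t hst
      have hsx : ¬ G.Adj x s := by
        intro h
        rcases hx_nbrs s h with rfl | rfl
        · exact lt_irrefl _ hs.2
        · linarith [hs.2]
      have hsy : ¬ G.Adj y s := by
        intro h
        have := part1 s h (fun e => by rw [e] at hs; exact lt_irrefl _ hs.1)
        linarith [hs.1]
      constructor
      · rcases lt_trichotomy (t : ℝ) (s : ℝ) with hts | hts | hts
        · rcases hstable x s hs.1 with h | h | h
          · exact absurd h hsx
          · have := h z haxz hxz
            linarith [hs.2]
          · have hxt := h t hst hts
            have : (x : ℝ) ≤ t := by linarith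
            rcases this.lt_or_eq with h' | h'
            · exact h'
            · exfalso
              have : t = x := Subtype.ext h'.symm
              subst this
              exact hsx hst.symm
        · exact absurd (Subtype.ext hts) hst.ne'
        · exact hs.1.trans hts
      · rcases hstable s y hs.2 with h | h | h
        · exact absurd h.symm hsy
        · rcases le_or_gt (t : ℝ) (s : ℝ) with hts | hts
          · linarith [hs.2]
          · have := h t hst hts
            have hty : (t : ℝ) ≤ y := by linarith
            rcases hty.lt_or_eq with h' | h'
            · exact h'
            · exfalso
              have : t = y := Subtype.ext h'
              subst this
              exact hsy hst.symm
        · have := h x hayx hxy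
          linarith [hs.1]
    have hxB : x ∈ B := reach_mem B hBclosed hv.symm ⟨h1, h2⟩
    exact lt_irrefl _ hxB.1
  exact ⟨part1, part2⟩
end

section
/- Let $(p_{i,j})_{i \in \mathbb{Z}, j \in \{1,2,3\}}$ be real numbers with $p_{i,j} \in [i, i + 1/3]$ for all $i, j$, and with $p_{i,1}, p_{i,2}, p_{i,3}$ pairwise distinct for each $i$. Let $P = \{p_{i,j} : i \in \mathbb{Z}, j \in \{1,2,3\}\}$, and let $G$ be the simple graph on $P$ whose edges are exactly the pairs $\{p_{i,j}, p_{i,j'}\}$ with $j \neq j'$ (i.e. each triple $\{p_{i,1}, p_{i,2}, p_{i,3}\}$ forms a triangle). Then $G$ is a stable multi-matching in which every vertex has degree exactly $2$, and every connected component of $G$ has exactly $3$ vertices. -/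
/-- Example 4: if `p i j ∈ [i, i + 1/3]` for `i ∈ ℤ`, `j ∈ {1,2,3}`, with the three points
`p i 1, p i 2, p i 3` pairwise distinct, `P = {p i j}`, and `G` is the graph on `P` whose edges
are exactly the pairs `{p i j, p i j'}` with `j ≠ j'` (each triple forms a triangle), then `G`
is a 2-regular stable multi-matching whose components all have exactly `3` vertices. -/
theorem triangle_example
    (p : ℤ → Fin 3 → ℝ) (hp : ∀ (i : ℤ) (j : Fin 3), p i j ∈ Set.Icc (i : ℝ) ((i : ℝ) + 1 / 3))
    (hdist : ∀ (i : ℤ) (j j' : Fin 3), j ≠ j' → p i j ≠ p i j')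
    (P : Set ℝ) (hP : P = {x : ℝ | ∃ (i : ℤ) (j : Fin 3), x = p i j})
    (G : SimpleGraph P)
    (hG : ∀ u v : P, G.Adj u v ↔ ∃ (i : ℤ) (j j' : Fin 3),
      j ≠ j' ∧ (u : ℝ) = p i j ∧ (v : ℝ) = p i j') :
    IsStableMultiMatching P G ∧ (∀ x : P, {y : P | G.Adj x y}.ncard = 2) ∧
      (∀ x : P, {y : P | G.Reachable x y}.ncard = 3) := by
  subst hP
  have hfloor : ∀ (i : ℤ) (j : Fin 3), ⌊p i j⌋ = i := by
    intro i j
    obtain ⟨h1, h2⟩ := hp i j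
    exact Int.floor_eq_iff.mpr ⟨h1, by linarith⟩
  have hsame : ∀ (i i' : ℤ) (j j' : Fin 3), p i j = p i' j' → i = i' := by
    intro i i' j j' h
    have h1 := hfloor i j
    rw [h, hfloor] at h1
    exact h1.symm
  have hinj : ∀ (i : ℤ) (j j' : Fin 3), p i j = p i j' → j = j' := by
    intro i j j' h
    by_contra hne
    exact hdist i j j' hne h
  have hmem : ∀ (i : ℤ) (j : Fin 3), p i j ∈ {x : ℝ | ∃ (i : ℤ) (j : Fin 3), x = p i j} :=
    fun i j => ⟨i, j, rfl⟩
  have hshort : ∀ (x z : {x : ℝ | ∃ (i : ℤ) (j : Fin 3), x = p i j}), G.Adj x z →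
      |(z : ℝ) - (x : ℝ)| ≤ 1 / 3 := by
    intro x z h
    obtain ⟨i, j, j', _, hx, hz⟩ := (hG x z).mp h
    obtain ⟨a1, a2⟩ := hp i j
    obtain ⟨b1, b2⟩ := hp i j'
    rw [abs_sub_le_iff]
    constructor <;> linarith
  have hwalk : ∀ (u v : {x : ℝ | ∃ (i : ℤ) (j : Fin 3), x = p i j}), G.Walk u v →
      ⌊(u : ℝ)⌋ = ⌊(v : ℝ)⌋ := by
    intro u v w
    induction w with
    | nil => rfl
    | cons h q ih =>
      rename_i a b c
      obtain ⟨i', j1, j2, _, hu, hv⟩ := (hG _ _).mp h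
      calc ⌊(a : ℝ)⌋ = ⌊(b : ℝ)⌋ := by rw [hu, hv, hfloor, hfloor]
        _ = ⌊(c : ℝ)⌋ := ih
  refine ⟨?_, ?_, ?_⟩
  · -- stability
    intro x y hxy
    obtain ⟨ix, jx, hx⟩ := x.2
    obtain ⟨iy, jy, hy⟩ := y.2
    by_cases hi : ix = iy
    · left
      subst hi
      refine (hG x y).mpr ⟨ix, jx, jy, ?_, hx, hy⟩
      intro h
      exact hxy (Subtype.ext (by rw [hx, hy, h]))
    · right; left
      intro z hz
      have h1 := hshort x z hz
      have h2 : (2 : ℝ) / 3 ≤ |(y : ℝ) - (x : ℝ)| := by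
        obtain ⟨a1, a2⟩ := hp ix jx
        obtain ⟨b1, b2⟩ := hp iy jy
        rcases lt_or_gt_of_ne hi with h | h
        · have h3 : (ix : ℝ) + 1 ≤ iy := by exact_mod_cast Int.add_one_le_iff.mpr h
          linarith [le_abs_self ((y : ℝ) - (x : ℝ))]
        · have h3 : (iy : ℝ) + 1 ≤ ix := by exact_mod_cast Int.add_one_le_iff.mpr h
          linarith [neg_abs_le ((y : ℝ) - (x : ℝ))]
      linarith
  · -- degree 2
    intro x
    obtain ⟨i, j, hx⟩ := x.2
    have hset : {y | G.Adj x y} =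
        (fun k : Fin 3 => (⟨p i k, hmem i k⟩ : {x : ℝ | ∃ (i : ℤ) (j : Fin 3), x = p i j}))
          '' ({j}ᶜ) := by
      ext y
      simp only [Set.mem_setOf_eq, Set.mem_image, Set.mem_compl_iff, Set.mem_singleton_iff]
      constructor
      · intro h
        obtain ⟨i', j1, j2, hne, hx', hy'⟩ := (hG x y).mp h
        have hi : i = i' := hsame i i' j j1 (hx ▸ hx')
        subst hi
        have hj : j1 = j := (hinj i j j1 (hx ▸ hx')).symm
        subst hj
        exact ⟨j2, Ne.symm hne, Subtype.ext hy'.symm⟩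
      · rintro ⟨k, hk, rfl⟩
        exact (hG x _).mpr ⟨i, j, k, Ne.symm hk, hx, rfl⟩
    rw [hset, Set.ncard_image_of_injective _ ?_, Set.ncard_eq_toFinset_card']
    · simp [Finset.card_compl]
    · intro a b hab
      exact hinj i a b (congrArg Subtype.val hab)
  · -- components of size 3
    intro x
    obtain ⟨i, j, hx⟩ := x.2
    have hset : {y | G.Reachable x y} =
        (fun k : Fin 3 => (⟨p i k, hmem i k⟩ : {x : ℝ | ∃ (i : ℤ) (j : Fin 3), x = p i j}))
          '' Set.univ := by
      ext y
      simp only [Set.mem_setOf_eq, Set.mem_image, Set.mem_univ, true_and]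
      constructor
      · intro hr
        obtain ⟨w⟩ := hr
        have hf := hwalk _ _ w
        obtain ⟨i', j', hy⟩ := y.2
        have : i = i' := by
          rw [hx, hfloor, hy, hfloor] at hf
          exact hf
        subst this
        exact ⟨j', Subtype.ext hy.symm⟩
      · rintro ⟨k, rfl⟩
        by_cases hjk : j = k
        · have hxy : x = ⟨p i k, hmem i k⟩ := Subtype.ext (by rw [hx, hjk])
          rw [← hxy]
        · exact SimpleGraph.Adj.reachable ((hG x _).mpr ⟨i, j, k, hjk, hx, rfl⟩)
    rw [hset, Set.ncard_image_of_injective _ ?_]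
    · rw [Set.ncard_univ]; simp
    · intro a b hab
      exact hinj i a b (congrArg Subtype.val hab)
end

section
/- Define $f : [0,1] \to \mathbb{R}$ by $f(p) = p^9 + 9 p^8 (1 - p)$. Then for every $p$ with $0.968 < p < 1$, we have $f(p) > p$. -/
/-- The function `f(p) = p⁹ + 9p⁸(1-p)` (the probability that a `Binomial(9,p)` variable is
at least 8) satisfies `f(p) > p` for all `p ∈ (0.968, 1)`. -/
theorem f_gt_p (f : ℝ → ℝ) (hf : ∀ p : ℝ, f p = p ^ 9 + 9 * p ^ 8 * (1 - p)) :
    ∀ p : ℝ, 0.968 < p → p < 1 → p < f p := by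
  intro p h1 h2
  set t : ℝ := 1 - p with hts
  have ht0 : 0 < t := by simp [hts]; linarith
  have ht1 : t < 0.032 := by simp [hts]; linarith
  have key : 0 < 1 - 35*t + 133*t^2 - 245*t^3 := by nlinarith [sq_nonneg t, mul_pos ht0 ht0, sq_nonneg (t - 0.032)]
  have key2 : 0 < 259 - 161*t + 55*t^2 - 8*t^3 := by nlinarith [sq_nonneg t, mul_pos ht0 ht0]
  have h3 : f p - p = (1 - t) * (t * (1 - 35*t + 133*t^2 - 245*t^3)
      + t^5 * (259 - 161*t + 55*t^2 - 8*t^3)) := by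
    rw [hf, hts]; ring
  have h4 : (0:ℝ) < 1 - t := by simp [hts]; linarith
  have h5 : 0 < t^5 := pow_pos ht0 5
  nlinarith [mul_pos ht0 key, mul_pos h5 key2,
    mul_pos h4 (add_pos (mul_pos ht0 key) (mul_pos h5 key2))]
end
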